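/- In an idempotent residuated chain, for a strictly negative element b (b < 1), the element b^⋆ := b^ℓ ∧ b^r is the smallest element of the positive cone {x : 1 ≤ x} with respect to the monoidal preorder ⊑ such that b ⊏ b^⋆ (i.e., the ≤-largest positive a with b·a = a·b = b ≠ a). -/
import Mathlib


/-- In an idempotent residuated chain, for strictly negative `b`, the element
`b^⋆ = b^ℓ ∧ b^r` is the ≤-largest positive element `a` with `b·a = a·b = b ≠ a`. -/
theorem stmt13 {A : Type*} [LinearOrder A] [Monoid A]
    (ld rd : A → A → A)
    (resl : ∀ x y z : A, x * y ≤ z ↔ y ≤ ld x z)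
    (resr : ∀ x y z : A, x * y ≤ z ↔ x ≤ rd z y)
    (idem : ∀ x : A, x * x = x) :
    ∀ b : A, b < 1 →
      (1 ≤ rd 1 b ⊓ ld b 1 ∧
        b * (rd 1 b ⊓ ld b 1) = b ∧ (rd 1 b ⊓ ld b 1) * b = b ∧
        b ≠ rd 1 b ⊓ ld b 1) ∧
      (∀ a : A, 1 ≤ a → b * a = b → a * b = b → b ≠ a → a ≤ rd 1 b ⊓ ld b 1) := by
  have monoL : ∀ x y z : A, y ≤ z → x * y ≤ x * z := fun x y z h =>
    (resl x y (x * z)).mpr (h.trans ((resl x z (x * z)).mp le_rfl))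
  have monoR : ∀ x y z : A, y ≤ z → y * x ≤ z * x := fun x y z h =>
    (resr y x (z * x)).mpr (h.trans ((resr z x (z * x)).mp le_rfl))
  intro b hb
  set s := rd 1 b ⊓ ld b 1 with hsdef
  have h1 : (1 : A) ≤ ld b 1 := (resl b 1 1).mp (by rw [mul_one]; exact hb.le)
  have h2 : (1 : A) ≤ rd 1 b := (resr 1 b 1).mp (by rw [one_mul]; exact hb.le)
  have hs1 : (1 : A) ≤ s := le_inf h2 h1
  have hbs1 : b * s ≤ 1 := (resl b s 1).mpr inf_le_right
  have hsb1 : s * b ≤ 1 := (resr s b 1).mpr inf_le_left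
  have hbs : b * s = b := by
    apply le_antisymm
    · calc b * s = b * (b * s) := by rw [← mul_assoc, idem]
        _ ≤ b * 1 := monoL _ _ _ hbs1
        _ = b := mul_one b
    · calc b = b * 1 := (mul_one b).symm
        _ ≤ b * s := monoL _ _ _ hs1
  have hsb : s * b = b := by
    apply le_antisymm
    · calc s * b = (s * b) * b := by rw [mul_assoc, idem]
        _ ≤ 1 * b := monoR _ _ _ hsb1
        _ = b := one_mul b
    · calc b = 1 * b := (one_mul b).symm
        _ ≤ s * b := monoR _ _ _ hs1
  refine ⟨⟨hs1, hbs, hsb, fun h => absurd (h ▸ hs1) (not_le.mpr hb)⟩, ?_⟩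
  intro a _ hba hab _
  exact le_inf ((resr a b 1).mp (by rw [hab]; exact hb.le)) ((resl b a 1).mp (by rw [hba]; exact hb.le))
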